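/- arXiv:1603.03509 — 7 statements merged into one kernel-verified Lean document; each statement's English description precedes it below -/
import Mathlib

section
/- For every r ≥ 1 and every function C : ℕ × ℕ → ℕ^r, there exist natural numbers x₁ < x₂ < x₃ such that C(x₁, x₂) ≤ C(x₂, x₃) in the coordinatewise order on ℕ^r. -/
/-!
If no such triple existed, every increasing triple `x < y < z` would have a coordinate `i` with
`C (y, z) i < C (x, y) i`. Colouring the triple by such an `i` and applying the infinite Ramsey
theorem for triples with `r` colours gives an increasing sequence `F` all of whose triples get the
same colour `i`; then `m ↦ C (F m, F (m + 1)) i` is a strictly decreasing sequence of naturals.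
-/

namespace AdjacentRamsey

open Set

variable {α : Type*}

def IsHomogeneous {k : ℕ} (c : (Fin k → ℕ) → α) (H : Set ℕ) (i : α) : Prop :=
  ∀ g : Fin k → ℕ, StrictMono g → (∀ j, g j ∈ H) → c g = i

lemma exists_isHomogeneous_cons [Finite α] {k : ℕ} (c : (Fin (k + 1) → ℕ) → α)
    (ih : ∀ (c' : (Fin k → ℕ) → α) (S : Set ℕ), S.Infinite →
      ∃ H ⊆ S, H.Infinite ∧ ∃ i, IsHomogeneous c' H i)
    {S : Set ℕ} (hS : S.Infinite) :
    ∃ T ⊆ S, T.Infinite ∧ (∀ t ∈ T, sInf S < t) ∧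
      ∃ i, IsHomogeneous (fun g => c (Fin.cons (sInf S) g)) T i := by
  obtain ⟨T, hTS, hT, i, hi⟩ :=
    ih (fun g => c (Fin.cons (sInf S) g)) _ (hS.sdiff (finite_Iic (sInf S)))
  exact ⟨T, fun t ht => (hTS ht).1, hT, fun t ht => not_le.1 (hTS ht).2, i, hi⟩

section Iterate

variable {T : Set ℕ → Set ℕ} (hTS : ∀ S : Set ℕ, S.Infinite → T S ⊆ S)
  (hT : ∀ S : Set ℕ, S.Infinite → (T S).Infinite) {S : Set ℕ} (hS : S.Infinite)
include hT hS

lemma infinite_iterate (n : ℕ) : (T^[n] S).Infinite := by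
  induction n with
  | zero => exact hS
  | succ n ih => rw [Function.iterate_succ_apply']; exact hT _ ih

include hTS

lemma iterate_subset_iterate {n m : ℕ} (h : n ≤ m) : T^[m] S ⊆ T^[n] S := by
  induction h with
  | refl => exact subset_rfl
  | step _ ih =>
    rw [Function.iterate_succ_apply']
    exact (hTS _ (infinite_iterate hT hS _)).trans ih

lemma sInf_iterate_mem {n m : ℕ} (h : n < m) : sInf (T^[m] S) ∈ T (T^[n] S) := by
  rw [← Function.iterate_succ_apply' T]
  exact iterate_subset_iterate hTS hT hS h (Nat.sInf_mem (infinite_iterate hT hS m).nonempty)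

end Iterate

theorem exists_infinite_isHomogeneous [Finite α] (k : ℕ) (c : (Fin k → ℕ) → α) {S : Set ℕ}
    (hS : S.Infinite) : ∃ H ⊆ S, H.Infinite ∧ ∃ i, IsHomogeneous c H i := by
  induction k generalizing S with
  | zero => exact ⟨S, subset_rfl, hS, c Fin.elim0, fun g _ _ => congrArg c (Subsingleton.elim _ _)⟩
  | succ k ih =>
    /- Iterating the one-step shrinking from `S` yields `a 0 < a 1 < ⋯` such that the colour of an
    increasing tuple from the `a`'s depends only on the index of its first entry; the `a n` whose
    index gets a colour taken infinitely often form `H`. -/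
    have : Nonempty α := ⟨c 0⟩
    choose! T hTS hT hgt i hi using fun (S : Set ℕ) (hS : S.Infinite) =>
      exists_isHomogeneous_cons c (fun c' _ hS' => ih c' hS') hS
    set a : ℕ → ℕ := fun n => sInf (T^[n] S)
    have ha : StrictMono a := fun n m h =>
      hgt _ (infinite_iterate hT hS n) _ (sInf_iterate_mem hTS hT hS h)
    obtain ⟨j, hj⟩ := Finite.exists_infinite_fiber fun n => i (T^[n] S)
    refine ⟨a '' ((fun n => i (T^[n] S)) ⁻¹' {j}), ?_,
      (infinite_coe_iff.1 hj).image ha.injective.injOn, j, ?_⟩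
    · rintro _ ⟨n, -, rfl⟩
      exact iterate_subset_iterate hTS hT hS n.zero_le
        (Nat.sInf_mem (infinite_iterate hT hS n).nonempty)
    · intro g hg hgH
      obtain ⟨n, hn, hn0⟩ := hgH 0
      rw [← Fin.cons_self_tail g, ← hn0, ← mem_singleton_iff.1 hn]
      refine hi _ (infinite_iterate hT hS n) _ (hg.comp Fin.strictMono_succ) fun l => ?_
      obtain ⟨m, -, hm⟩ := hgH l.succ
      have hnm : n < m := ha.lt_iff_lt.1 (hm ▸ hn0 ▸ hg (Fin.succ_pos l))
      rw [Fin.tail, ← hm]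
      exact sInf_iterate_mem hTS hT hS hnm

theorem exists_strictMono_forall_comp_eq [Finite α] (k : ℕ) (c : (Fin k → ℕ) → α) :
    ∃ F : ℕ → ℕ, StrictMono F ∧ ∃ i, ∀ g : Fin k → ℕ, StrictMono g → c (F ∘ g) = i := by
  obtain ⟨H, -, hH, i, hi⟩ := exists_infinite_isHomogeneous k c infinite_univ
  exact ⟨Nat.nth (· ∈ H), Nat.nth_strictMono hH, i, fun g hg =>
    hi _ ((Nat.nth_strictMono hH).comp hg) fun j => Nat.nth_mem_of_infinite hH (g j)⟩

end AdjacentRamsey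

theorem adjacentRamsey_pairs_general (r : ℕ) (C : ℕ × ℕ → (Fin r → ℕ)) :
    ∃ x₁ x₂ x₃ : ℕ, x₁ < x₂ ∧ x₂ < x₃ ∧ C (x₁, x₂) ≤ C (x₂, x₃) := by
  by_contra! h
  have hdrop : ∀ x y z, x < y → y < z → ∃ i, C (y, z) i < C (x, y) i := fun x y z hxy hyz => by
    simpa [Pi.le_def] using h x y z hxy hyz
  have : Nonempty (Fin r) := let ⟨i, _⟩ := hdrop 0 1 2 one_pos one_lt_two; ⟨i⟩
  choose! c hc using hdrop
  obtain ⟨F, hF, i, hi⟩ :=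
    AdjacentRamsey.exists_strictMono_forall_comp_eq 3 fun g => c (g 0) (g 1) (g 2)
  have hdesc : ∀ m, C (F (m + 1), F (m + 2)) i < C (F m, F (m + 1)) i := fun m => by
    have hcol : c (F m) (F (m + 1)) (F (m + 2)) = i := by
      simpa using hi (fun j => m + j) fun _ _ h => Nat.add_lt_add_left h m
    exact hcol ▸ hc _ _ _ (hF m.lt_succ_self) (hF (m + 1).lt_succ_self)
  exact not_strictAnti_of_wellFoundedLT (fun m => C (F m, F (m + 1)) i)
    (strictAnti_nat_of_succ_lt hdesc)

/-- Infinite adjacent Ramsey theorem for pairs with codimension `r`: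
for every `C : ℕ × ℕ → ℕ^r` there are `x₁ < x₂ < x₃` with
`C (x₁, x₂) ≤ C (x₂, x₃)` coordinatewise. -/
theorem adjacentRamsey_pairs (r : ℕ) (hr : 1 ≤ r) (C : ℕ × ℕ → (Fin r → ℕ)) :
    ∃ x₁ x₂ x₃ : ℕ, x₁ < x₂ ∧ x₂ < x₃ ∧ C (x₁, x₂) ≤ C (x₂, x₃) :=
  adjacentRamsey_pairs_general r C
end

section
/- Let K be a field and n ≥ 1. For every infinite sequence I : ℕ → Ideal (MvPolynomial (Fin n) K) of monomial ideals, there exist indices i < j such that I j ⊆ I i (Maclagan's theorem). -/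
/-!
A monomial ideal is determined by the upper set of exponents of its monomials, and inclusion of
ideals is reverse inclusion of these upper sets, which is `≤` in `UpperSet (Fin n →₀ ℕ)`. So it
suffices that `UpperSet (Fin n → ℕ)` is well-quasi-ordered, and by induction on `n` that this
passes from `UpperSet α` to `UpperSet (ℕ × α)`. An upper set `U` of `ℕ × α` is the chain of its
slices `U_0 ≥ U_1 ≥ ⋯` in `UpperSet α`, which is eventually constant, say from `r` on, since a
well-quasi-order is well founded. Code `U` by its limit `U_r` and the list `[U_0, …, U_{r-1}]`;
by Higman's lemma the codes are well-quasi-ordered, and because the chains are antitone, a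
comparison of codes yields `U_k ≤ V_k` for every `k`.
-/

theorem List.SublistForall₂.exists_le_index {α β : Type*} {R : α → β → Prop} {l₁ : List α}
    {l₂ : List β} (h : List.SublistForall₂ R l₁ l₂) {i : ℕ} (hi : i < l₁.length) :
    ∃ (j : ℕ) (hj : j < l₂.length), i ≤ j ∧ R l₁[i] l₂[j] := by
  induction h generalizing i with
  | nil => simp at hi
  | cons hab _ ih =>
    cases i with
    | zero => exact ⟨0, by simp, le_rfl, hab⟩
    | succ i =>
      obtain ⟨j, hj, hij, hr⟩ := ih (by simpa using hi)
      exact ⟨j + 1, by simpa using hj, by omega, hr⟩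
  | cons_right _ ih =>
    obtain ⟨j, hj, hij, hr⟩ := ih hi
    exact ⟨j + 1, by simpa using hj, by omega, hr⟩

theorem WellQuasiOrdered.sublistForall₂ {α : Type*} {r : α → α → Prop} [IsPreorder α r]
    (h : WellQuasiOrdered r) : WellQuasiOrdered (List.SublistForall₂ r) := fun _ =>
  ((Set.partiallyWellOrderedOn_univ_iff.mpr h).partiallyWellOrderedOn_sublistForall₂ r).exists_lt
    fun _ _ _ => Set.mem_univ _

theorem Antitone.le_of_sublistForall₂ {β : Type*} [Preorder β] {f g : ℕ → β} (hg : Antitone g)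
    {m n : ℕ} (hf : ∀ k, m ≤ k → f m = f k) (hgn : ∀ k, n ≤ k → g n = g k) (hlim : f m ≤ g n)
    (h : List.SublistForall₂ (· ≤ ·) ((List.range m).map f) ((List.range n).map g)) (k : ℕ) :
    f k ≤ g k := by
  rcases lt_or_ge k m with hk | hk
  · obtain ⟨j, hj, hkj, hle⟩ := h.exists_le_index (by simpa using hk)
    simp only [List.getElem_map, List.getElem_range] at hle
    exact hle.trans (hg hkj)
  · have hgk : g n ≤ g k := by
      rcases le_total k n with hkn | hnk
      exacts [hg hkn, (hgn k hnk).le]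
    exact (hf k hk) ▸ hlim.trans hgk

namespace UpperSet

variable {α β : Type*} [Preorder α] [Preorder β]

def slice (U : UpperSet (β × α)) (b : β) : UpperSet α :=
  ⟨{a | (b, a) ∈ U}, fun _ _ hxy hx => U.upper (Prod.mk_le_mk.2 ⟨le_rfl, hxy⟩) hx⟩

theorem slice_antitone (U : UpperSet (β × α)) : Antitone U.slice :=
  fun _ _ hb _ ha => U.upper (Prod.mk_le_mk.2 ⟨hb, le_rfl⟩) ha

theorem le_iff_forall_slice_le {U V : UpperSet (β × α)} : U ≤ V ↔ ∀ b, U.slice b ≤ V.slice b :=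
  ⟨fun h _ _ ha => h ha, fun h p hp => h p.1 hp⟩

instance wellQuasiOrderedLE_nat_prod [WellQuasiOrderedLE (UpperSet α)] :
    WellQuasiOrderedLE (UpperSet (ℕ × α)) := by
  choose r hr using fun U : UpperSet (ℕ × α) =>
    WellFoundedLT.antitone_chain_condition U.slice_antitone
  let code : UpperSet (ℕ × α) → UpperSet α × List (UpperSet α) :=
    fun U => (U.slice (r U), (List.range (r U)).map U.slice)
  refine ⟨fun F => ?_⟩
  obtain ⟨i, j, hij, hlim, hlist⟩ :=
    wellQuasiOrdered_le.prod wellQuasiOrdered_le.sublistForall₂ (code ∘ F)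
  exact ⟨i, j, hij, le_iff_forall_slice_le.2 <|
    (F j).slice_antitone.le_of_sublistForall₂ (hr (F i)) (hr (F j)) hlim hlist⟩

theorem wellQuasiOrderedLE_fin_arrow_nat :
    ∀ n : ℕ, WellQuasiOrderedLE (UpperSet (Fin n → ℕ))
  | 0 => Finite.to_wellQuasiOrderedLE
  | n + 1 =>
    have := wellQuasiOrderedLE_fin_arrow_nat n
    (map (Fin.consOrderIso fun _ => ℕ)).wellQuasiOrderedLE_iff.1 inferInstance

theorem wellQuasiOrderedLE_fin_finsupp_nat (n : ℕ) :
    WellQuasiOrderedLE (UpperSet (Fin n →₀ ℕ)) :=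
  have := wellQuasiOrderedLE_fin_arrow_nat n
  (map Finsupp.orderIsoFunOnFinite.symm).wellQuasiOrderedLE_iff.1 inferInstance

end UpperSet

theorem MvPolynomial.span_monomial_le_of_upperClosure_le {σ R : Type*} [CommSemiring R]
    {S T : Set (σ →₀ ℕ)} (h : upperClosure S ≤ upperClosure T) :
    Ideal.span ((fun s => monomial s (1 : R)) '' T) ≤
      Ideal.span ((fun s => monomial s (1 : R)) '' S) := by
  rw [Ideal.span_le]
  rintro _ ⟨t, ht, rfl⟩
  rw [SetLike.mem_coe, mem_ideal_span_monomial_image]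
  intro _ hmem
  obtain rfl := Finset.mem_singleton.1 (support_monomial_subset hmem)
  exact mem_upperClosure.1 (h (subset_upperClosure ht))

theorem maclagan_general (K : Type*) [Field K] (n : ℕ)
    (I : ℕ → Ideal (MvPolynomial (Fin n) K))
    (hmon : ∀ k, ∃ S : Set (Fin n →₀ ℕ),
      I k = Ideal.span ((fun s => (MvPolynomial.monomial s (1 : K))) '' S)) :
    ∃ i j, i < j ∧ I j ≤ I i := by
  choose S hS using hmon
  have := UpperSet.wellQuasiOrderedLE_fin_finsupp_nat n
  obtain ⟨i, j, hij, hle⟩ := wellQuasiOrdered_le fun k => upperClosure (S k)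
  refine ⟨i, j, hij, ?_⟩
  rw [hS i, hS j]
  exact MvPolynomial.span_monomial_le_of_upperClosure_le hle

/-- Maclagan's theorem: every infinite sequence of monomial ideals in
`K[X_1, …, X_n]` contains an ideal that is a subset of an earlier one. -/
theorem maclagan (K : Type*) [Field K] (n : ℕ) (hn : 1 ≤ n)
    (I : ℕ → Ideal (MvPolynomial (Fin n) K))
    (hmon : ∀ k, ∃ S : Set (Fin n →₀ ℕ),
      I k = Ideal.span ((fun s => (MvPolynomial.monomial s (1 : K))) '' S)) :
    ∃ i j, i < j ∧ I j ≤ I i :=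
  maclagan_general K n I hmon
end

section
/- For all d, l ∈ ℕ there exists R ∈ ℕ such that for every function C : {l, …, R}² → ℕ^{d+2} satisfying max-coordinate of C(x, y) ≤ max {x, y} for all x, y ∈ {l, …, R}, there exist a < b < c in {l, …, R} with C(a, b) ≤ C(b, c) coordinatewise. -/
/-!
If no bound `R` worked, pick a bad colouring `C_R` for every `R`. Since `C_R x y` takes only
finitely many values, a nonprincipal ultrafilter on `R` yields a limit colouring of all pairs
of `ℕ` that is bad as well. That contradicts the infinite version: colour each triple `a < b < c`
by the set of coordinates in which `C b c` lies strictly below `C a b`. Ramsey's theorem for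
triples gives an infinite set on which this colour is constant and, by badness, nonempty; along
consecutive elements of that set one coordinate of `C` then descends forever.
-/

open Set Filter

/-- The diagonal construction behind Ramsey's theorem. -/
lemma exists_strictMono_of_refine {Q : ℕ → Set ℕ → Prop} (hQ : ∀ a, Antitone (Q a))
    (hrefine : ∀ S : Set ℕ, S.Infinite → ∃ T ⊆ S, T.Infinite ∧ Q (sInf S) T)
    {S : Set ℕ} (hS : S.Infinite) :
    ∃ a : ℕ → ℕ, StrictMono a ∧ range a ⊆ S ∧ ∀ i, Q (a i) (a '' Ioi i) := by
  have hstep : ∀ S : {S : Set ℕ // S.Infinite}, ∃ T : {T : Set ℕ // T.Infinite},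
      T.1 ⊆ S.1 \ Iic (sInf S.1) ∧ Q (sInf S.1) T.1 := by
    rintro ⟨S, hS⟩
    obtain ⟨T, hTS, hT, hQT⟩ := hrefine S hS
    exact ⟨⟨T \ Iic (sInf S), hT.sdiff (finite_Iic _)⟩, sdiff_subset_sdiff_left hTS,
      hQ _ sdiff_subset hQT⟩
  choose step hstep using hstep
  set seq : ℕ → {S : Set ℕ // S.Infinite} := fun n => step^[n] ⟨S, hS⟩
  have hseq_succ : ∀ n, seq (n + 1) = step (seq n) := fun n =>
    Function.iterate_succ_apply' step n _
  set a : ℕ → ℕ := fun n => sInf (seq n).1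
  have ha_mem : ∀ n, a n ∈ (seq n).1 := fun n => Nat.sInf_mem (seq n).2.nonempty
  have hanti : Antitone fun n => (seq n).1 := antitone_nat_of_succ_le fun n => by
    rw [hseq_succ]; exact (hstep _).1.trans sdiff_subset
  have htail : ∀ i, a '' Ioi i ⊆ (seq (i + 1)).1 := by
    rintro i _ ⟨j, hij, rfl⟩
    exact hanti (Nat.succ_le_of_lt hij) (ha_mem j)
  have hlt : ∀ i, ∀ m ∈ (seq (i + 1)).1, a i < m := fun i m hm => by
    rw [hseq_succ] at hm; exact not_le.1 ((hstep _).1 hm).2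
  refine ⟨a, fun i j hij => hlt i _ (htail i ⟨j, hij, rfl⟩), ?_, fun i => ?_⟩
  · rintro _ ⟨n, rfl⟩
    exact hanti (Nat.zero_le n) (ha_mem n)
  · refine hQ _ (htail i) ?_
    rw [hseq_succ]; exact (hstep _).2

/-- Infinite Ramsey theorem for `n`-element subsets of `ℕ`, written as increasing `n`-tuples. -/
theorem exists_infinite_monochromatic {β : Type*} [Finite β] (n : ℕ) (c : (Fin n → ℕ) → β)
    {S : Set ℕ} (hS : S.Infinite) :
    ∃ T ⊆ S, T.Infinite ∧ ∃ e, ∀ x : Fin n → ℕ, StrictMono x → range x ⊆ T → c x = e := by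
  induction n generalizing S with
  | zero =>
    exact ⟨S, subset_rfl, hS, c finZeroElim, fun x _ _ => congrArg c (Subsingleton.elim _ _)⟩
  | succ n ih =>
    obtain ⟨a, ha, haS, hcol⟩ := exists_strictMono_of_refine
      (Q := fun a T => ∃ e, ∀ x : Fin n → ℕ, StrictMono x → range x ⊆ T → c (Fin.cons a x) = e)
      (fun a T T' hTT' ⟨e, he⟩ => ⟨e, fun x hx hxT => he x hx (hxT.trans hTT')⟩)
      (fun S hS => ih (fun x => c (Fin.cons (sInf S) x)) hS) hS
    choose e he using hcol
    obtain ⟨b, hb⟩ := Finite.exists_infinite_fiber e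
    rw [infinite_coe_iff] at hb
    refine ⟨a '' (e ⁻¹' {b}), (image_subset_range _ _).trans haS, hb.image ha.injective.injOn,
      b, fun x hx hxT => ?_⟩
    obtain ⟨i, hi, hxi⟩ := hxT (mem_range_self 0)
    have htail : range (Fin.tail x) ⊆ a '' Ioi i := by
      rintro _ ⟨k, rfl⟩
      obtain ⟨j, -, hxj⟩ := hxT (mem_range_self k.succ)
      refine ⟨j, ha.lt_iff_lt.1 ?_, hxj⟩
      rw [hxi, hxj]; exact hx (Fin.succ_pos k)
    rw [← Fin.cons_self_tail x, ← hxi, he i (Fin.tail x) (hx.comp Fin.strictMono_succ) htail, hi]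

theorem exists_adjacent_le {ι α : Type*} [Finite ι] [LinearOrder α] [WellFoundedLT α]
    (f : ℕ → ℕ → ι → α) : ∃ a b c, a < b ∧ b < c ∧ f a b ≤ f b c := by
  by_contra! hf
  obtain ⟨T, -, hT, E, hE⟩ := exists_infinite_monochromatic 3
    (fun x => {k | f (x 1) (x 2) k < f (x 0) (x 1) k}) infinite_univ
  set y := Nat.nth (· ∈ T)
  have hy : StrictMono y := Nat.nth_strictMono hT
  have hdrop : ∀ i, {k | f (y (i + 1)) (y (i + 2)) k < f (y i) (y (i + 1)) k} = E := fun i => by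
    simpa using hE (fun k : Fin 3 => y (i + k)) (hy.comp fun _ _ h => by simpa using h)
      (by rintro _ ⟨k, rfl⟩; exact Nat.nth_mem_of_infinite hT _)
  obtain ⟨k, hk⟩ : E.Nonempty := by
    rw [← hdrop 0]
    simpa [Pi.le_def, Set.Nonempty] using hf (y 0) (y 1) (y 2) (hy one_pos) (hy one_lt_two)
  obtain ⟨i, hi⟩ := WellFounded.not_rel_apply_succ (r := (· < ·)) fun i => f (y i) (y (i + 1)) k
  exact hi (by simpa [← hdrop i] using hk)

lemma Ultrafilter.exists_eventually_eq_of_eventually_le {γ α : Type*} [Preorder α]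
    [LocallyFiniteOrderBot α] (U : Ultrafilter γ) {s : γ → α} {M : α}
    (hs : ∀ᶠ R in U, s R ≤ M) : ∃ v, ∀ᶠ R in U, s R = v := by
  obtain ⟨v, -, hv⟩ := (U.eventually_exists_mem_iff (P := fun v R => s R = v) (finite_Iic M)).1
    (hs.mono fun R hR => ⟨s R, hR, rfl⟩)
  exact ⟨v, hv⟩

/-- Finite adjacent Ramsey theorem for pairs with codimension `d+2` and diagonal bound:
for all `d, l` there is `R` such that every `C : {l, …, R}² → ℕ^{d+2}` with
`max (C x y) ≤ max x y` admits `a < b < c` in `{l, …, R}` with `C a b ≤ C b c`. -/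
theorem finiteAdjacentRamsey_pairs (d l : ℕ) :
    ∃ R : ℕ, ∀ C : ℕ → ℕ → (Fin (d + 2) → ℕ),
      (∀ x y, l ≤ x → x ≤ R → l ≤ y → y ≤ R → ∀ k, C x y k ≤ max x y) →
      ∃ a b c, l ≤ a ∧ a < b ∧ b < c ∧ c ≤ R ∧ C a b ≤ C b c := by
  by_contra! hbad
  choose C hC hCbad using hbad
  have heventually_ge : ∀ n, ∀ᶠ R in hyperfilter ℕ, n ≤ R := fun n =>
    (eventually_ge_atTop n).filter_mono Nat.hyperfilter_le_atTop
  have hlimit : ∀ a b, ∃ v, ∀ᶠ R in hyperfilter ℕ, C R (a + l) (b + l) = v := fun a b =>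
    (hyperfilter ℕ).exists_eventually_eq_of_eventually_le (M := fun _ => max (a + l) (b + l))
      ((heventually_ge _).mono fun R hR k => hC R _ _ (by omega) (le_of_max_le_left hR)
        (by omega) (le_of_max_le_right hR) k)
  choose f hf using hlimit
  obtain ⟨a, b, c, hab, hbc, hle⟩ := exists_adjacent_le f
  obtain ⟨R, hRab, hRbc, hcR⟩ := ((hf a b).and ((hf b c).and (heventually_ge (c + l)))).exists
  exact hCbad R (a + l) (b + l) (c + l) (by omega) (by omega) (by omega) hcR (hRab ▸ hRbc ▸ hle)
end

section
/- Let K be a field. For every j ∈ ℕ there exists a sequence I_0, …, I_{2^j} of monomial ideals in K[X_0, Y] such that deg(I_i) ≤ 2j + 2 for all i and there are no indices i < i' with I_i ⊇ I_{i'}. In particular M_0^0(2j + 2) ≥ 2^j. -/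
/-- `I` is a monomial ideal generated by monomials of total degree at most `deg`. -/
def MonGen {K : Type*} [Field K] {n : ℕ} (I : Ideal (MvPolynomial (Fin n) K)) (deg : ℕ) : Prop :=
  ∃ S : Set (Fin n →₀ ℕ), (∀ s ∈ S, (s.sum fun _ e => e) ≤ deg) ∧
    I = Ideal.span ((fun s => (MvPolynomial.monomial s (1 : K))) '' S)

/-- `Mnum K d f l` : the least `M` (infimum of the set of such `M`) such that every
sequence `I_0, …, I_M` of monomial ideals in the `d+2`-variable polynomial ring over `K`
with `deg (I i) ≤ l + f i` for all `i ≤ M` admits `i < j ≤ M` with `I j ⊆ I i`. -/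
noncomputable def Mnum (K : Type*) [Field K] (d : ℕ) (f : ℕ → ℕ) (l : ℕ) : ℕ :=
  sInf {M | ∀ I : ℕ → Ideal (MvPolynomial (Fin (d + 2)) K),
    (∀ i ≤ M, MonGen (I i) (l + f i)) →
    ∃ i j, i < j ∧ j ≤ M ∧ I j ≤ I i}

section Aux

open MvPolynomial

/-- total degree of a `Fin 2` finsupp -/
lemma sumval (s : Fin 2 →₀ ℕ) : (s.sum fun _ e => e) = s 0 + s 1 := by
  rw [Finsupp.sum_fintype]
  · exact Fin.sum_univ_two _
  · intro; rfl

lemma finsupp_eq_of_le_of_sum (s t : Fin 2 →₀ ℕ) (hle : s ≤ t)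
    (hsum : (s.sum fun _ e => e) = (t.sum fun _ e => e)) : s = t := by
  rw [sumval, sumval] at hsum
  have h0 := hle 0
  have h1 := hle 1
  ext x
  revert x
  rw [Fin.forall_fin_two]
  constructor <;> omega

noncomputable def expo (L a : ℕ) : Fin 2 →₀ ℕ := Finsupp.single 0 a + Finsupp.single 1 (L - a)

lemma expo_apply0 (L a : ℕ) : expo L a 0 = a := by simp [expo]

lemma expo_sum (L a : ℕ) (h : a ≤ L) : ((expo L a).sum fun _ e => e) = L := by
  rw [sumval, expo]
  simp
  omega

def bitv (i k : ℕ) : ℕ := if i.testBit k then 1 else 0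

lemma bitv_le (i k : ℕ) : bitv i k ≤ 1 := by unfold bitv; split <;> omega

lemma bitv_inj {i i' k : ℕ} (h : bitv i k = bitv i' k) : i.testBit k = i'.testBit k := by
  unfold bitv at h
  cases hb : i.testBit k <;> cases hb' : i'.testBit k <;> simp [hb, hb'] at h ⊢

def aset (j i : ℕ) : Finset ℕ :=
  if i = 2 ^ j then insert (2*j+1) ((Finset.range j).image (fun k => 2*k))
  else insert (2*j) ((Finset.range j).image (fun k => 2*k + bitv i k))

lemma aset_le (j i a : ℕ) (h : a ∈ aset j i) : a ≤ 2*j+1 := by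
  unfold aset at h
  split at h <;> simp only [Finset.mem_insert, Finset.mem_image, Finset.mem_range] at h <;>
    rcases h with h | ⟨k, hk, rfl⟩ <;> first | omega | (have := bitv_le i k; omega)

lemma aset_witness {j i i' : ℕ} (h : i < i') (h' : i' ≤ 2 ^ j) :
    ∃ a ∈ aset j i', a ∉ aset j i := by
  rcases eq_or_lt_of_le h' with rfl | h' -- note: rfl : i' = 2 ^ j? direction
  · refine ⟨2*j+1, ?_, ?_⟩
    · simp [aset]
    · have hne : i ≠ 2 ^ j := by omega
      simp only [aset, if_neg hne, Finset.mem_insert, Finset.mem_image, Finset.mem_range]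
      push_neg
      refine ⟨by omega, fun k hk => ?_⟩
      have := bitv_le i k; omega
  · have hne : i ≠ i' := by omega
    have : ∃ k, i.testBit k ≠ i'.testBit k := by
      by_contra hc
      push_neg at hc
      exact hne (Nat.eq_of_testBit_eq hc)
    obtain ⟨k, hk⟩ := this
    have hklt : k < j := by
      by_contra hge
      push_neg at hge
      have h1 : i.testBit k = false :=
        Nat.testBit_lt_two_pow (lt_of_lt_of_le (by omega) (Nat.pow_le_pow_right (by norm_num) hge))
      have h2 : i'.testBit k = false :=
        Nat.testBit_lt_two_pow (lt_of_lt_of_le h' (Nat.pow_le_pow_right (by norm_num) hge))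
      rw [h1, h2] at hk; exact hk rfl
    have hi'ne : i' ≠ 2 ^ j := by omega
    have hine : i ≠ 2 ^ j := by omega
    refine ⟨2*k + bitv i' k, ?_, ?_⟩
    · simp only [aset, if_neg hi'ne, Finset.mem_insert, Finset.mem_image, Finset.mem_range]
      exact Or.inr ⟨k, hklt, rfl⟩
    · simp only [aset, if_neg hine, Finset.mem_insert, Finset.mem_image, Finset.mem_range]
      push_neg
      have hb' := bitv_le i' k
      refine ⟨by omega, fun m hm heq => ?_⟩
      have hb := bitv_le i m
      have hkm : k = m ∧ bitv i' k = bitv i m := by omega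
      rw [hkm.1] at hk hkm
      exact hk (bitv_inj hkm.2.symm)

end Aux

open MvPolynomial in
/-- For every `j` there is a bad sequence `I_0, …, I_{2^j}` of monomial ideals in
`K[X_0, Y]` with `deg (I i) ≤ 2j + 2`; in particular `M_0^0(2j + 2) ≥ 2^j`. -/
theorem lowerBound_M0 (K : Type*) [Field K] (j : ℕ) :
    (∃ I : ℕ → Ideal (MvPolynomial (Fin 2) K),
      (∀ i ≤ 2 ^ j, MonGen (I i) (2 * j + 2)) ∧
      ∀ i i', i < i' → i' ≤ 2 ^ j → ¬ I i' ≤ I i) ∧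
    2 ^ j ≤ Mnum K 0 (fun _ => 0) (2 * j + 2) := by
  set L := 2 * j + 2 with hL
  -- the bad sequence
  set I : ℕ → Ideal (MvPolynomial (Fin 2) K) := fun i =>
    Ideal.span ((fun s => (monomial s (1 : K))) '' (expo L '' ↑(aset j i))) with hI
  have hmon : ∀ i, MonGen (I i) L := by
    intro i
    refine ⟨expo L '' ↑(aset j i), ?_, rfl⟩
    rintro _ ⟨a, ha, rfl⟩
    have := aset_le j i a ha
    rw [expo_sum L a (by omega)]
  have hbad : ∀ i i', i < i' → i' ≤ 2 ^ j → ¬ I i' ≤ I i := by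
    intro i i' hlt hle hsub
    obtain ⟨a, ha', ha⟩ := aset_witness hlt hle
    have haL : a ≤ L := by have := aset_le j i' a ha'; omega
    have hmem : (monomial (expo L a) (1 : K)) ∈ I i' :=
      Ideal.subset_span ⟨expo L a, Set.mem_image_of_mem _ (by exact_mod_cast ha'), rfl⟩
    have hmem' := hsub hmem
    rw [hI] at hmem'
    rw [mem_ideal_span_monomial_image] at hmem'
    have hsupp : expo L a ∈ (monomial (expo L a) (1 : K)).support := by
      classical
      rw [support_monomial, if_neg one_ne_zero]; exact Finset.mem_singleton_self _
    obtain ⟨si, hsi, hsile⟩ := hmem' _ hsupp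
    obtain ⟨b, hb, rfl⟩ := hsi
    have hbA : b ∈ aset j i := by exact_mod_cast hb
    have hbL : b ≤ L := by have := aset_le j i b hbA; omega
    have heq : expo L b = expo L a := by
      refine finsupp_eq_of_le_of_sum _ _ hsile ?_
      rw [expo_sum L b hbL, expo_sum L a haL]
    have : b = a := by
      have := congrArg (fun s => s 0) heq
      simpa [expo_apply0] using this
    exact ha (this ▸ hbA)
  refine ⟨⟨I, fun i _ => hmon i, hbad⟩, ?_⟩
  -- lower bound on Mnum
  have hlower : ∀ M ∈ {M | ∀ I : ℕ → Ideal (MvPolynomial (Fin (0 + 2)) K),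
      (∀ i ≤ M, MonGen (I i) (L + 0)) →
      ∃ i j', i < j' ∧ j' ≤ M ∧ I j' ≤ I i}, 2 ^ j ≤ M := by
    intro M hM
    by_contra hlt
    push_neg at hlt
    obtain ⟨i, j', hij, hj'M, hsub⟩ := hM I (fun i _ => by simpa using hmon i)
    exact hbad i j' hij (by omega) hsub
  -- nonemptiness of the set
  set M₀ := Fintype.card (Set (Fin (L + 1) × Fin (L + 1))) with hM₀
  have hne : M₀ ∈ {M | ∀ I : ℕ → Ideal (MvPolynomial (Fin (0 + 2)) K),
      (∀ i ≤ M, MonGen (I i) (L + 0)) →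
      ∃ i j', i < j' ∧ j' ≤ M ∧ I j' ≤ I i} := by
    intro J hJ
    set F : Fin (M₀ + 1) → Set (Fin (L + 1) × Fin (L + 1)) := fun k =>
      {p | (monomial (Finsupp.single 0 (p.1 : ℕ) + Finsupp.single 1 (p.2 : ℕ)) (1 : K)) ∈ J k}
      with hF
    obtain ⟨x, y, hxy, hFeq⟩ := Fintype.exists_ne_map_eq_of_card_lt F (by simp [hM₀])
    -- wlog x < y
    wlog hlt : x < y generalizing x y
    · exact this y x hxy.symm hFeq.symm (by omega)
    refine ⟨x, y, hlt, y.is_le, ?_⟩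
    obtain ⟨S, hS, hSeq⟩ := hJ y y.is_le
    rw [hSeq, Ideal.span_le]
    rintro _ ⟨s, hs, rfl⟩
    have hsum := hS s hs
    rw [sumval] at hsum
    have h0 : s 0 ≤ L := by omega
    have h1 : s 1 ≤ L := by omega
    set p : Fin (L + 1) × Fin (L + 1) := (⟨s 0, by omega⟩, ⟨s 1, by omega⟩) with hp
    have hsrep : s = Finsupp.single 0 (p.1 : ℕ) + Finsupp.single 1 (p.2 : ℕ) := by
      ext v; fin_cases v <;> simp [hp]
    have hpy : p ∈ F y := by
      rw [hF]
      simp only [Set.mem_setOf_eq]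
      rw [← hsrep, hSeq]
      exact Ideal.subset_span ⟨s, hs, rfl⟩
    rw [← hFeq] at hpy
    rw [hF] at hpy
    simp only [Set.mem_setOf_eq] at hpy
    rw [← hsrep] at hpy
    exact hpy
  exact le_csInf ⟨M₀, hne⟩ hlower
end

section
/- Let K be a field. For all d, j, c ∈ ℕ: M_{d+2}^0(j + c) ≥ (M_d^0(j))^{c+1}. Concretely, if there is a sequence of M_d^0(j) monomial ideals in K[X_d, …, X_0, Y], each of degree ≤ j, with no earlier ideal containing a later one, then there is such a 'bad' sequence of (M_d^0(j))^{c+1} monomial ideals of degree ≤ j + c in K[X_{d+2}, X_{d+1}, X_d, …, X_0, Y]. -/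
/-!
Write `i < N ^ (c + 1)` in base `N`, with digits `i_0, …, i_c`. Given a bad sequence
`I_0, …, I_{N-1}` generated in degree `≤ j`, let `J_i` be generated by the monomials
`x^s u^k v^(c-k)` with `k ≤ c` and `x^s` a generator of `I_{i_k}`; these have degree `≤ j + c`.
Generators with different `k` are incomparable, so `J_{i'} ⊆ J_i` forces `I_{i'_k} ⊆ I_{i_k}`
for every `k`, while `i < i'` gives a digit with `i_k < i'_k`. Since there are only finitely many
monomial ideals of bounded degree, `Mnum` is the length of a longest bad sequence, which turns
the construction into the inequality.
-/

open MvPolynomial Finsupp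

theorem exists_digit_lt_of_lt {N i i' : ℕ} (c : ℕ) (hi' : i' < N ^ (c + 1)) (h : i < i') :
    ∃ t ≤ c, i / N ^ t % N < i' / N ^ t % N := by
  induction c generalizing i i' with
  | zero =>
    refine ⟨0, le_rfl, ?_⟩
    rw [pow_one] at hi'
    simpa [Nat.mod_eq_of_lt hi', Nat.mod_eq_of_lt (h.trans hi')] using h
  | succ c ih =>
    rcases (Nat.div_le_div_right (c := N) h.le).lt_or_eq with hq | hq
    · have hq' : i' / N < N ^ (c + 1) := by
        rw [Nat.div_lt_iff_lt_mul (Nat.pos_of_ne_zero (by rintro rfl; simp at hi')), ← pow_succ]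
        exact hi'
      obtain ⟨t, ht, hlt⟩ := ih hq' hq
      refine ⟨t + 1, by omega, ?_⟩
      simpa only [pow_succ', ← Nat.div_div_eq_div_mul] using hlt
    · refine ⟨0, Nat.zero_le _, ?_⟩
      have hi := Nat.div_add_mod i N
      rw [hq] at hi
      have := Nat.div_add_mod i' N
      simp only [pow_zero, Nat.div_one]
      omega

theorem span_monomial_image_le_iff {σ R : Type*} [CommSemiring R] [Nontrivial R]
    {S T : Set (σ →₀ ℕ)} :
    Ideal.span ((fun s => monomial s (1 : R)) '' T) ≤
        Ideal.span ((fun s => monomial s (1 : R)) '' S) ↔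
      ∀ t ∈ T, ∃ s ∈ S, s ≤ t := by
  classical
  simp only [Ideal.span_le, Set.subset_def, SetLike.mem_coe, mem_ideal_span_monomial_image,
    Set.forall_mem_image, support_monomial, one_ne_zero, if_false, Finset.mem_singleton, forall_eq]

def IsBadSeq {R : Type*} [CommSemiring R] (I : ℕ → Ideal R) (N : ℕ) : Prop :=
  ∀ i i', i < i' → i' < N → ¬ I i' ≤ I i

section

variable {n : ℕ}

noncomputable def liftExp (c k : ℕ) (s : Fin n →₀ ℕ) : Fin (n + 2) →₀ ℕ :=
  equivFunOnFinite.symm (Fin.snoc (Fin.snoc ⇑s k) (c - k))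

theorem degree_liftExp {c k : ℕ} (hk : k ≤ c) (s : Fin n →₀ ℕ) :
    (liftExp c k s).degree = s.degree + c := by
  simp only [degree_eq_sum, liftExp, coe_equivFunOnFinite_symm, Fin.sum_univ_castSucc,
    Fin.snoc_castSucc, Fin.snoc_last]
  omega

theorem liftExp_le_liftExp_iff {c k k' : ℕ} (hk : k ≤ c) (hk' : k' ≤ c) (s s' : Fin n →₀ ℕ) :
    liftExp c k s ≤ liftExp c k' s' ↔ k = k' ∧ s ≤ s' := by
  simp only [Finsupp.le_def, liftExp, coe_equivFunOnFinite_symm, Fin.forall_fin_succ',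
    Fin.snoc_castSucc, Fin.snoc_last]
  exact ⟨fun ⟨⟨hs, _⟩, _⟩ => ⟨by omega, hs⟩, by rintro ⟨rfl, hs⟩; exact ⟨⟨hs, le_rfl⟩, le_rfl⟩⟩

end

section MonGen

variable {K : Type*} [Field K] {n : ℕ}

def expsDegLE (I : Ideal (MvPolynomial (Fin n) K)) (L : ℕ) : Set (Fin n →₀ ℕ) :=
  {s | s.degree ≤ L ∧ monomial s 1 ∈ I}

theorem MonGen.eq_span_expsDegLE {I : Ideal (MvPolynomial (Fin n) K)} {L : ℕ} (h : MonGen I L) :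
    I = Ideal.span ((fun s => monomial s (1 : K)) '' expsDegLE I L) := by
  obtain ⟨S, hS, rfl⟩ := h
  refine le_antisymm (Ideal.span_mono (Set.image_mono fun s hs => ⟨hS s hs, ?_⟩)) ?_
  · exact Ideal.subset_span ⟨s, hs, rfl⟩
  · rw [Ideal.span_le]
    rintro _ ⟨s, hs, rfl⟩
    exact hs.2

theorem finite_setOf_monGen (L : ℕ) : {I : Ideal (MvPolynomial (Fin n) K) | MonGen I L}.Finite :=
  Set.Finite.of_injOn (f := (expsDegLE · L)) (t := {A | A ⊆ {s | s.degree ≤ L}})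
    (fun _ _ _ hs => hs.1)
    (fun _ hI _ hJ h => by rw [hI.eq_span_expsDegLE, hJ.eq_span_expsDegLE]; simp only [h])
    (finite_of_degree_le L).finite_subsets

theorem exists_forall_monGen_exists_eq (L : ℕ) :
    ∃ M, ∀ I : ℕ → Ideal (MvPolynomial (Fin n) K), (∀ i ≤ M, MonGen (I i) L) →
      ∃ i j, i < j ∧ j ≤ M ∧ I j = I i := by
  classical
  have hfin := finite_setOf_monGen (K := K) (n := n) L
  refine ⟨hfin.toFinset.card, fun I hI => ?_⟩
  obtain ⟨a, ha, b, hb, hab, heq⟩ := Finset.exists_ne_map_eq_of_card_lt_of_maps_to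
    (s := Finset.range (hfin.toFinset.card + 1)) (by simp)
    (fun i hi => hfin.mem_toFinset.2 (hI i (Nat.lt_succ_iff.1 (Finset.mem_range.1 hi))))
  simp only [Finset.mem_range, Nat.lt_succ_iff] at ha hb
  rcases hab.lt_or_gt with h | h
  · exact ⟨a, b, h, hb, heq.symm⟩
  · exact ⟨b, a, h, ha, heq⟩

theorem IsBadSeq.exists_pow {N L : ℕ} (c : ℕ) {I : ℕ → Ideal (MvPolynomial (Fin n) K)}
    (hI : ∀ i < N, MonGen (I i) L) (hbad : IsBadSeq I N) :
    ∃ J : ℕ → Ideal (MvPolynomial (Fin (n + 2)) K),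
      (∀ i < N ^ (c + 1), MonGen (J i) (L + c)) ∧ IsBadSeq J (N ^ (c + 1)) := by
  let T (i : ℕ) : Set (Fin (n + 2) →₀ ℕ) :=
    ⋃ k ≤ c, liftExp c k '' expsDegLE (I (i / N ^ k % N)) L
  refine ⟨fun i => Ideal.span ((fun s => monomial s (1 : K)) '' T i), fun i _ => ⟨T i, ?_, rfl⟩, ?_⟩
  · simp only [T, Set.mem_iUnion, Set.mem_image]
    rintro _ ⟨k, hk, s, hs, rfl⟩
    change (liftExp c k s).degree ≤ L + c
    rw [degree_liftExp hk]
    exact Nat.add_le_add_right hs.1 c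
  · intro i i' hii' hi' hle
    have hN : 0 < N := Nat.pos_of_ne_zero (by rintro rfl; simp at hi')
    obtain ⟨t, ht, hlt⟩ := exists_digit_lt_of_lt c hi' hii'
    apply hbad _ _ hlt (Nat.mod_lt _ hN)
    rw [(hI (i' / N ^ t % N) (Nat.mod_lt _ hN)).eq_span_expsDegLE,
      (hI (i / N ^ t % N) (Nat.mod_lt _ hN)).eq_span_expsDegLE, span_monomial_image_le_iff]
    intro m hm
    obtain ⟨_, hmem, hle'⟩ := span_monomial_image_le_iff.1 hle (liftExp c t m)
      (Set.mem_biUnion ht (Set.mem_image_of_mem _ hm))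
    obtain ⟨k, hk, s, hs, rfl⟩ : ∃ k ≤ c, ∃ s ∈ expsDegLE (I (i / N ^ k % N)) L,
        liftExp c k s = _ := by simpa [T] using hmem
    obtain ⟨rfl, hsm⟩ := (liftExp_le_liftExp_iff hk ht s m).1 hle'
    exact ⟨s, hs, hsm⟩

theorem exists_isBadSeq_Mnum (K : Type*) [Field K] (d : ℕ) (f : ℕ → ℕ) (l : ℕ) :
    ∃ I : ℕ → Ideal (MvPolynomial (Fin (d + 2)) K),
      (∀ i < Mnum K d f l, MonGen (I i) (l + f i)) ∧ IsBadSeq I (Mnum K d f l) := by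
  rcases Nat.eq_zero_or_pos (Mnum K d f l) with h | h
  · exact ⟨fun _ => ⊥, by simp [h], fun _ _ _ h' => by omega⟩
  · unfold Mnum at h ⊢
    have hmem := Nat.notMem_of_lt_sInf (Nat.sub_lt h one_pos)
    simp only [Set.mem_ofPred_eq, not_forall, not_exists, not_and] at hmem
    obtain ⟨I, hI, hbad⟩ := hmem
    exact ⟨I, fun i hi => hI i (by omega), fun i i' hii' hi' => hbad i i' hii' (by omega)⟩

theorem le_Mnum_of_isBadSeq {K : Type*} [Field K] {d l P : ℕ}
    {J : ℕ → Ideal (MvPolynomial (Fin (d + 2)) K)} (hJ : ∀ i < P, MonGen (J i) l)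
    (hbad : IsBadSeq J P) : P ≤ Mnum K d (fun _ => 0) l := by
  obtain ⟨M, hM⟩ := exists_forall_monGen_exists_eq (K := K) (n := d + 2) l
  refine le_csInf ⟨M, fun I hI => ?_⟩ fun b hb => ?_
  · obtain ⟨i, j, hij, hj, heq⟩ := hM I hI
    exact ⟨i, j, hij, hj, heq.le⟩
  · by_contra! hbP
    obtain ⟨i, j, hij, hj, hle⟩ := hb J fun i hi => hJ i (hi.trans_lt hbP)
    exact hbad i j hij (hj.trans_lt hbP) hle

end MonGen

/-- `M_{d+2}^0(j + c) ≥ (M_d^0(j))^{c+1}`: moreover, a bad sequence of `M_d^0(j)`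
monomial ideals of degree `≤ j` in `d + 2` variables yields a bad sequence of
`(M_d^0(j))^{c+1}` monomial ideals of degree `≤ j + c` in `d + 4` variables. -/
theorem lowerBound_M0_step (K : Type*) [Field K] (d j c : ℕ) :
    (Mnum K d (fun _ => 0) j) ^ (c + 1) ≤ Mnum K (d + 2) (fun _ => 0) (j + c) ∧
    ((∃ I : ℕ → Ideal (MvPolynomial (Fin (d + 2)) K),
        (∀ i < Mnum K d (fun _ => 0) j, MonGen (I i) j) ∧
        ∀ i i', i < i' → i' < Mnum K d (fun _ => 0) j → ¬ I i' ≤ I i) →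
      ∃ J : ℕ → Ideal (MvPolynomial (Fin (d + 4)) K),
        (∀ i < (Mnum K d (fun _ => 0) j) ^ (c + 1), MonGen (J i) (j + c)) ∧
        ∀ i i', i < i' → i' < (Mnum K d (fun _ => 0) j) ^ (c + 1) → ¬ J i' ≤ J i) := by
  refine ⟨?_, fun ⟨I, hI, hbad⟩ => IsBadSeq.exists_pow c hI hbad⟩
  obtain ⟨I, hI, hbad⟩ := exists_isBadSeq_Mnum K d (fun _ => 0) j
  obtain ⟨J, hJ, hJbad⟩ := IsBadSeq.exists_pow c hI hbad
  exact le_Mnum_of_isBadSeq hJ hJbad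
end

section
/- Let K be a field. For all c, j ∈ ℕ: M_{2c}^0(2^{c+1}·(j + 1)) ≥ 2^{j^{c+1}}; i.e., there exists a sequence of 2^{j^{c+1}} monomial ideals in K[X_{2c}, …, X_0, Y], each of degree ≤ 2^{c+1}·(j+1), in which no earlier ideal contains a later one. -/
open MvPolynomial Finsupp

section BoundedDegree

variable (K : Type*) [Field K]

theorem setOf_monGen_finite (n l : ℕ) :
    {I : Ideal (MvPolynomial (Fin n) K) | MonGen I l}.Finite := by
  refine (((finite_of_degree_le l).powerset).image
    fun S => Ideal.span ((fun s => monomial s (1 : K)) '' S)).subset ?_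
  rintro I ⟨S, hS, rfl⟩
  exact ⟨S, hS, rfl⟩

theorem exists_bound_of_monGen (n l : ℕ) :
    ∃ M, ∀ I : ℕ → Ideal (MvPolynomial (Fin n) K),
      (∀ i ≤ M, MonGen (I i) l) → ∃ i j, i < j ∧ j ≤ M ∧ I j ≤ I i := by
  set T := (setOf_monGen_finite K n l).toFinset
  refine ⟨T.card, fun I hI => ?_⟩
  obtain ⟨x, hx, y, hy, hxy, hIxy⟩ :=
    Finset.exists_ne_map_eq_of_card_lt_of_maps_to (s := Finset.range (T.card + 1)) (t := T)
      (by simp) (f := I) fun i hi => by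
        simpa [T] using hI i (Nat.lt_succ_iff.mp (Finset.mem_range.mp hi))
  simp only [Finset.mem_range, Nat.lt_succ_iff] at hx hy
  rcases Nat.lt_or_gt_of_ne hxy with h | h
  · exact ⟨x, y, h, hy, hIxy.ge⟩
  · exact ⟨y, x, h, hx, hIxy.le⟩

variable {K} {n : ℕ}

theorem MonGen.mono {I : Ideal (MvPolynomial (Fin n) K)} {l l' : ℕ} (h : MonGen I l)
    (hl : l ≤ l') : MonGen I l' :=
  let ⟨S, hS, hI⟩ := h
  ⟨S, fun s hs => (hS s hs).trans hl, hI⟩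

theorem le_Mnum_of_bad_sequence {d l B : ℕ} {f : ℕ → ℕ} (hf : ∀ i, f i ≤ B) {N : ℕ}
    (I : ℕ → Ideal (MvPolynomial (Fin (d + 2)) K)) (hI : ∀ i < N, MonGen (I i) (l + f i))
    (hbad : ∀ i i', i < i' → i' < N → ¬ I i' ≤ I i) : N ≤ Mnum K d f l := by
  refine le_csInf ?_ fun M hM => ?_
  · obtain ⟨M, hM⟩ := exists_bound_of_monGen K (d + 2) (l + B)
    exact ⟨M, fun J hJ => hM J fun i hi => MonGen.mono (hJ i hi) (Nat.add_le_add_left (hf i) l)⟩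
  · by_contra! hMN
    obtain ⟨i, i', hii', hi'M, hle⟩ := hM I fun i hi => hI i (by omega)
    exact hbad i i' hii' (by omega) hle

theorem exists_bad_sequence {β : Type*} [Fintype β] {J : β → Ideal (MvPolynomial (Fin n) K)}
    {l : ℕ} (hJ : ∀ b, MonGen (J b) l) (hJle : ∀ a b, J a ≤ J b → a = b) :
    ∃ I : ℕ → Ideal (MvPolynomial (Fin n) K),
      (∀ i < Fintype.card β, MonGen (I i) l) ∧
      ∀ i i', i < i' → i' < Fintype.card β → ¬ I i' ≤ I i := by
  let e := (Fintype.equivFin β).symm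
  refine ⟨fun i => if h : i < Fintype.card β then J (e ⟨i, h⟩) else ⊥,
    fun i hi => by simpa [hi] using hJ _, fun i i' hii' hi' hle => ?_⟩
  simp only [hi', hii'.trans hi', dite_true] at hle
  exact hii'.ne' (congrArg Fin.val (e.injective (hJle _ _ hle)))

end BoundedDegree

theorem Finsupp.degree_domCongr {σ τ : Type*} (e : σ ≃ τ) (x : σ →₀ ℕ) :
    degree (Finsupp.domCongr e x) = degree x := by
  rw [domCongr_apply, equivMapDomain_eq_mapDomain, degree_mapDomain]

theorem Finsupp.eq_of_le_of_degree_eq {σ : Type*} {s t : σ →₀ ℕ} (hst : s ≤ t)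
    (hdeg : degree s = degree t) : s = t := by
  have h : degree (t - s) = 0 := by
    have := congrArg degree (add_tsub_cancel_of_le hst)
    rw [map_add] at this
    omega
  rw [degree_eq_zero_iff, tsub_eq_zero_iff_le] at h
  exact hst.antisymm h

theorem subset_of_span_monomial_le {R σ : Type*} [CommSemiring R] [Nontrivial R]
    {S T : Set (σ →₀ ℕ)} {D : ℕ} (hS : ∀ s ∈ S, degree s = D)
    (hT : ∀ t ∈ T, degree t = D)
    (h : Ideal.span ((fun t => monomial t (1 : R)) '' T) ≤
      Ideal.span ((fun s => monomial s (1 : R)) '' S)) : T ⊆ S := by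
  intro t ht
  have hmem := h (Ideal.subset_span ⟨t, ht, rfl⟩)
  rw [mem_ideal_span_monomial_image] at hmem
  obtain ⟨s, hs, hst⟩ := hmem t (by classical simp [coeff_monomial])
  rwa [← eq_of_le_of_degree_eq hst ((hS s hs).trans (hT t ht).symm)]

section Transversal

variable (K : Type*) [Field K] {α σ : Type*}

noncomputable def transversalIdeal (E : α → Bool → σ →₀ ℕ) (τ : α → Bool) :
    Ideal (MvPolynomial σ K) :=
  Ideal.span ((fun s => monomial s (1 : K)) '' Set.range fun a => E a (τ a))

variable {K}

theorem monGen_transversalIdeal {n l : ℕ} {E : α → Bool → Fin n →₀ ℕ}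
    (hE : ∀ a b, degree (E a b) ≤ l) (τ : α → Bool) : MonGen (transversalIdeal K E τ) l :=
  ⟨_, by rintro _ ⟨a, rfl⟩; exact hE a (τ a), rfl⟩

theorem eq_of_transversalIdeal_le {E : α → Bool → σ →₀ ℕ} {D : ℕ}
    (hinj : Function.Injective (Function.uncurry E)) (hdeg : ∀ a b, degree (E a b) = D)
    {τ τ' : α → Bool} (h : transversalIdeal K E τ ≤ transversalIdeal K E τ') :
    τ = τ' := by
  funext a
  obtain ⟨a', ha'⟩ := subset_of_span_monomial_le (by rintro _ ⟨a, rfl⟩; exact hdeg _ _)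
    (by rintro _ ⟨a, rfl⟩; exact hdeg _ _) h ⟨a, rfl⟩
  obtain ⟨rfl, hτ⟩ := Prod.mk.inj (hinj (a₁ := (a', τ' a')) (a₂ := (a, τ a)) ha')
  exact hτ.symm

end Transversal

section DigitExponent

variable {ι : Type*} [Fintype ι] {j : ℕ}

noncomputable def digitExponent (x : ι → Fin j) (b : Bool) : ι ⊕ ι →₀ ℕ :=
  equivFunOnFinite.symm <|
    Sum.elim (fun k => 2 * x k + b.toNat) fun k => 2 * (x k).rev + (!b).toNat

theorem degree_digitExponent (x : ι → Fin j) (b : Bool) :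
    degree (digitExponent x b) = Fintype.card ι * (2 * j - 1) := by
  rw [degree_eq_sum, Fintype.sum_sum_type, ← Finset.sum_add_distrib]
  trans ∑ _k : ι, (2 * j - 1)
  · refine Finset.sum_congr rfl fun k _ => ?_
    have := (x k).isLt
    cases b <;> simp only [digitExponent, coe_equivFunOnFinite_symm, Sum.elim_inl,
      Sum.elim_inr, Bool.toNat_false, Bool.toNat_true, Bool.not_false, Bool.not_true,
      Fin.val_rev] <;> omega
  · simp

theorem digitExponent_injective [Nonempty ι] :
    Function.Injective (Function.uncurry (digitExponent (ι := ι) (j := j))) := by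
  rintro ⟨x, b⟩ ⟨x', b'⟩ h
  have hinl : ∀ k, 2 * (x k : ℕ) + b.toNat = 2 * x' k + b'.toNat := fun k =>
    DFunLike.congr_fun h (Sum.inl k)
  obtain ⟨k⟩ := ‹Nonempty ι›
  have hb : b = b' := by
    have hbit : b.toNat = b'.toNat := by
      have := hinl k; have := b.toNat_le; have := b'.toNat_le; omega
    cases b <;> cases b' <;> simp_all
  subst hb
  simp only [Prod.mk.injEq, and_true]
  exact funext fun k => Fin.ext (by have := hinl k; omega)

end DigitExponent

theorem succ_mul_two_mul_sub_one_le (c j : ℕ) : (c + 1) * (2 * j - 1) ≤ 2 ^ (c + 1) * (j + 1) :=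
  calc (c + 1) * (2 * j - 1) ≤ 2 ^ c * (2 * (j + 1)) :=
        Nat.mul_le_mul (Nat.lt_two_pow_self) (by omega)
    _ = 2 ^ (c + 1) * (j + 1) := by ring

/-- `M_{2c}^0(2^{c+1}·(j+1)) ≥ 2^{j^{c+1}}`: there is a bad sequence of `2^{j^{c+1}}`
monomial ideals of degree `≤ 2^{c+1}·(j+1)` in `K[X_{2c}, …, X_0, Y]`. -/
theorem lowerBound_M0_poly (K : Type*) [Field K] (c j : ℕ) :
    2 ^ (j ^ (c + 1)) ≤ Mnum K (2 * c) (fun _ => 0) (2 ^ (c + 1) * (j + 1)) ∧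
    ∃ I : ℕ → Ideal (MvPolynomial (Fin (2 * c + 2)) K),
      (∀ i < 2 ^ (j ^ (c + 1)), MonGen (I i) (2 ^ (c + 1) * (j + 1))) ∧
      ∀ i i', i < i' → i' < 2 ^ (j ^ (c + 1)) → ¬ I i' ≤ I i := by
  let e : Fin (c + 1) ⊕ Fin (c + 1) ≃ Fin (2 * c + 2) :=
    finSumFinEquiv.trans (finCongr (by omega))
  let E (x : Fin (c + 1) → Fin j) (b : Bool) := Finsupp.domCongr e (digitExponent x b)
  have hdeg (x b) : degree (E x b) = (c + 1) * (2 * j - 1) := by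
    rw [degree_domCongr, degree_digitExponent, Fintype.card_fin]
  have hinj : Function.Injective (Function.uncurry E) :=
    (Finsupp.domCongr e).injective.comp digitExponent_injective
  obtain ⟨I, hI, hbad⟩ := exists_bad_sequence
    (monGen_transversalIdeal (K := K) fun x b =>
      (hdeg x b).trans_le (succ_mul_two_mul_sub_one_le c j))
    fun _ _ => eq_of_transversalIdeal_le hinj hdeg
  have hcard : Fintype.card ((Fin (c + 1) → Fin j) → Bool) = 2 ^ (j ^ (c + 1)) := by simp
  rw [hcard] at hI hbad
  exact ⟨le_Mnum_of_bad_sequence (B := 0) (fun _ => le_rfl) I hI hbad, I, hI, hbad⟩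
end

section
/- Let K be a field. For all d, c, l ∈ ℕ: M_d^c(l) ≤ 2^{(l+c+1)^{d+2}} + 1. Concretely, every sequence I_0, …, I_R of monomial ideals in K[X_d, …, X_0, Y] with R = 2^{(l+c+1)^{d+2}} + 1 and deg(I_i) ≤ l + c for all i ≤ R contains indices i < j with I_i ⊇ I_j. -/
section Aux


open MvPolynomial

lemma apply_le_sum {n : ℕ} (s : Fin n →₀ ℕ) (k : Fin n) : s k ≤ s.sum fun _ e => e := by
  by_cases h : k ∈ s.support
  · exact Finset.single_le_sum (fun _ _ => Nat.zero_le _) h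
  · simp [Finsupp.notMem_support_iff.mp h]

/-- canonical generating set lemma -/
lemma MonGen_canonical {K : Type*} [Field K] {n : ℕ} {I : Ideal (MvPolynomial (Fin n) K)}
    {D : ℕ} (h : ∃ S : Set (Fin n →₀ ℕ), (∀ s ∈ S, (s.sum fun _ e => e) ≤ D) ∧
      I = Ideal.span ((fun s => (MvPolynomial.monomial s (1 : K))) '' S)) :
    I = Ideal.span ((fun s => (MvPolynomial.monomial s (1 : K))) ''
      {s | (s.sum fun _ e => e) ≤ D ∧ MvPolynomial.monomial s (1 : K) ∈ I}) := by
  obtain ⟨S, hdeg, hspan⟩ := h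
  apply le_antisymm
  · rw [hspan]
    apply Ideal.span_mono
    apply Set.image_mono
    intro s hs
    refine ⟨hdeg s hs, ?_⟩
    exact Ideal.subset_span ⟨s, hs, rfl⟩
  · rw [Ideal.span_le]
    rintro _ ⟨s, ⟨_, hmem⟩, rfl⟩
    exact hmem

theorem upperBound_const_aux (K : Type*) [Field K] (d c l : ℕ) :
    ∀ I : ℕ → Ideal (MvPolynomial (Fin (d + 2)) K),
      (∀ i ≤ 2 ^ ((l + c + 1) ^ (d + 2)) + 1,
        (∃ S : Set (Fin (d+2) →₀ ℕ), (∀ s ∈ S, (s.sum fun _ e => e) ≤ l + c) ∧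
          I i = Ideal.span ((fun s => (MvPolynomial.monomial s (1 : K))) '' S))) →
      ∃ i j, i < j ∧ j ≤ 2 ^ ((l + c + 1) ^ (d + 2)) + 1 ∧ I j ≤ I i := by
  intro I hI
  classical
  let T := {s : Fin (d + 2) →₀ ℕ // (s.sum fun _ e => e) ≤ l + c}
  let emb : T → (Fin (d + 2) → Fin (l + c + 1)) := fun t k =>
    ⟨t.val k, Nat.lt_succ_of_le (le_trans (apply_le_sum t.val k) t.property)⟩
  have hemb : Function.Injective emb := by
    intro t t' h
    ext k
    exact congrArg Fin.val (congrFun h k)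
  haveI : Fintype T := Fintype.ofInjective emb hemb
  have hcardT : Fintype.card T ≤ (l + c + 1) ^ (d + 2) := by
    calc Fintype.card T ≤ Fintype.card (Fin (d + 2) → Fin (l + c + 1)) :=
          Fintype.card_le_of_injective emb hemb
      _ = (l + c + 1) ^ (d + 2) := by simp
  let f : Fin (2 ^ ((l + c + 1) ^ (d + 2)) + 1 + 1) → (T → Bool) := fun i t =>
    decide (MvPolynomial.monomial t.val (1 : K) ∈ I i)
  have hcard : Fintype.card (T → Bool) <
      Fintype.card (Fin (2 ^ ((l + c + 1) ^ (d + 2)) + 1 + 1)) := by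
    rw [Fintype.card_fun, Fintype.card_fin, Fintype.card_bool]
    calc (2:ℕ) ^ Fintype.card T ≤ 2 ^ ((l + c + 1) ^ (d + 2)) :=
          Nat.pow_le_pow_right (by norm_num) hcardT
      _ < 2 ^ ((l + c + 1) ^ (d + 2)) + 1 + 1 := by omega
  obtain ⟨i, j, hij, hfeq⟩ := Fintype.exists_ne_map_eq_of_card_lt f hcard
  have key : ∀ a b : Fin (2 ^ ((l + c + 1) ^ (d + 2)) + 1 + 1), f a = f b → I a = I b := by
    intro a b hab
    rw [MonGen_canonical (hI a (Nat.lt_succ_iff.mp a.isLt)),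
        MonGen_canonical (hI b (Nat.lt_succ_iff.mp b.isLt))]
    congr 1
    apply congrArg
    ext s
    simp only [Set.mem_setOf_eq, and_congr_right_iff]
    intro hs
    have := congrFun hab ⟨s, hs⟩
    simpa [f] using this
  have heq : I i = I j := key i j hfeq
  rcases lt_or_gt_of_ne (fun h : (i:ℕ) = (j:ℕ) => hij (Fin.ext h)) with h | h
  · exact ⟨i, j, h, Nat.lt_succ_iff.mp j.isLt, le_of_eq heq.symm⟩
  · exact ⟨j, i, h, Nat.lt_succ_iff.mp i.isLt, le_of_eq heq⟩

end Aux

/-- `M_d^c(l) ≤ 2^{(l+c+1)^{d+2}} + 1`: every sequence `I_0, …, I_R` of monomial ideals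
in `K[X_d, …, X_0, Y]` with `R = 2^{(l+c+1)^{d+2}} + 1` and `deg (I i) ≤ l + c`
contains `i < j` with `I i ⊇ I j`. -/
theorem upperBound_const (K : Type*) [Field K] (d c l : ℕ) :
    Mnum K d (fun _ => c) l ≤ 2 ^ ((l + c + 1) ^ (d + 2)) + 1 ∧
    ∀ I : ℕ → Ideal (MvPolynomial (Fin (d + 2)) K),
      (∀ i ≤ 2 ^ ((l + c + 1) ^ (d + 2)) + 1, MonGen (I i) (l + c)) →
      ∃ i j, i < j ∧ j ≤ 2 ^ ((l + c + 1) ^ (d + 2)) + 1 ∧ I j ≤ I i := by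
  have main := upperBound_const_aux K d c l
  refine ⟨Nat.sInf_le ?_, main⟩
  exact main
end
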